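/- Structure of the multilinear components (Lemma 5.1, second assertion): Fix κ ∈ {1, −1} and let w_n^{(k)} be defined by the multilinear recursion. For every odd n and every k ≥ 1 there exists a family of real numbers a_{(α,α′)}, indexed by pairs of multi-indices (α, α′) ∈ ℕ_0^k × ℕ_0^{k−1} with |α| + |α′| = n − 1 − 2(k−1), such that for all Schwartz inputs w_n^{(k)}[φ_1,…,φ_k; ψ_2,…,ψ_k] = ∑_{(α,α′)} a_{(α,α′)} (∏_{r=1}^{k} ∂_x^{α_r} φ_r)(∏_{r=2}^{k} ∂_x^{α′_r} ψ_r). For every even n the same holds with an overall factor i, i.e. w_n^{(k)}[φ;ψ] = i ∑_{(α,α′)} a_{(α,α′)} (∏_{r=1}^{k} ∂_x^{α_r} φ_r)(∏_{r=2}^{k} ∂_x^{α′_r} ψ_r) with a_{(α,α′)} ∈ ℝ. (When n − 1 − 2(k−1) < 0 the index set is empty and the sum is zero.) -/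

import Mathlib

open Finset

namespace NLSaux

abbrev Idx (k : ℕ) := (Fin k → ℕ) × (Fin (k - 1) → ℕ)

noncomputable def mono (k : ℕ) (φ ψ : ℕ → SchwartzMap ℝ ℂ) (x : ℝ) (p : Idx k) : ℂ :=
  (∏ r : Fin k, (deriv^[p.1 r] ⇑(φ ((r : ℕ) + 1))) x) *
    ∏ r : Fin (k - 1), (deriv^[p.2 r] ⇑(ψ ((r : ℕ) + 2))) x

def degP {k : ℕ} (p : Idx k) : ℤ :=
  (∑ r : Fin k, (p.1 r : ℤ)) + ∑ r : Fin (k - 1), (p.2 r : ℤ)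

lemma expand_eq (k : ℕ) (a : Idx k →₀ ℝ) (φ ψ : ℕ → SchwartzMap ℝ ℂ) (x : ℝ) :
    (a.sum fun p c =>
      ((c : ℂ) * ∏ r : Fin k, (deriv^[p.1 r] ⇑(φ ((r : ℕ) + 1))) x) *
        ∏ r : Fin (k - 1), (deriv^[p.2 r] ⇑(ψ ((r : ℕ) + 2))) x) =
    Finsupp.linearCombination ℝ (mono k φ ψ x) a := by
  rw [Finsupp.linearCombination_apply]
  refine Finsupp.sum_congr fun p _ => ?_
  simp [mono, Complex.real_smul, mul_assoc]

lemma schwartz_hasDerivAt (f : SchwartzMap ℝ ℂ) (m : ℕ) (x : ℝ) :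
    HasDerivAt (deriv^[m] ⇑f) (deriv^[m + 1] ⇑f x) x := by
  have h : ContDiff ℝ ((⊤ : ℕ∞) : WithTop ℕ∞) (deriv^[m] ⇑f) := ContDiff.iterate_deriv m f.smooth'
  rw [Function.iterate_succ_apply']
  exact ((h.differentiable (by simp)).differentiableAt).hasDerivAt


def bump1 {k : ℕ} (p : Idx k) (r : Fin k) : Idx k := (Function.update p.1 r (p.1 r + 1), p.2)
def bump2 {k : ℕ} (p : Idx k) (r : Fin (k - 1)) : Idx k := (p.1, Function.update p.2 r (p.2 r + 1))

lemma hasDerivAt_mono (k : ℕ) (φ ψ : ℕ → SchwartzMap ℝ ℂ) (p : Idx k) (x : ℝ) :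
    HasDerivAt (fun y => mono k φ ψ y p)
      ((∑ r : Fin k, mono k φ ψ x (bump1 p r)) +
        ∑ r : Fin (k - 1), mono k φ ψ x (bump2 p r)) x := by
  have hF : HasDerivAt (fun y => ∏ r : Fin k, (deriv^[p.1 r] ⇑(φ ((r : ℕ) + 1))) y)
      (∑ r : Fin k, (∏ j ∈ Finset.univ.erase r, (deriv^[p.1 j] ⇑(φ ((j : ℕ) + 1))) x) •
        (deriv^[p.1 r + 1] ⇑(φ ((r : ℕ) + 1))) x) x :=
    HasDerivAt.fun_finsetProd fun r _ => schwartz_hasDerivAt _ _ _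
  have hG : HasDerivAt (fun y => ∏ r : Fin (k - 1), (deriv^[p.2 r] ⇑(ψ ((r : ℕ) + 2))) y)
      (∑ r : Fin (k - 1), (∏ j ∈ Finset.univ.erase r, (deriv^[p.2 j] ⇑(ψ ((j : ℕ) + 2))) x) •
        (deriv^[p.2 r + 1] ⇑(ψ ((r : ℕ) + 2))) x) x :=
    HasDerivAt.fun_finsetProd fun r _ => schwartz_hasDerivAt _ _ _
  have := hF.mul hG
  refine HasDerivAt.congr_deriv this (Eq.symm ?_)
  rw [Finset.sum_mul, Finset.mul_sum]
  congr 1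
  · refine Finset.sum_congr rfl fun r _ => ?_
    have h1 : (∏ r' : Fin k, (deriv^[(bump1 p r).1 r'] ⇑(φ ((r' : ℕ) + 1))) x) =
        (deriv^[p.1 r + 1] ⇑(φ ((r : ℕ) + 1))) x *
          ∏ j ∈ Finset.univ.erase r, (deriv^[p.1 j] ⇑(φ ((j : ℕ) + 1))) x := by
      rw [← Finset.mul_prod_erase Finset.univ _ (Finset.mem_univ r)]
      congr 1
      · simp [bump1]
      · refine Finset.prod_congr rfl fun j hj => ?_
        rw [Finset.mem_erase] at hj
        simp [bump1, Function.update_of_ne hj.1]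
    simp only [bump1] at h1
    simp only [mono, bump1, smul_eq_mul]
    rw [h1]
    ring
  · refine Finset.sum_congr rfl fun r _ => ?_
    have h1 : (∏ r' : Fin (k-1), (deriv^[(bump2 p r).2 r'] ⇑(ψ ((r' : ℕ) + 2))) x) =
        (deriv^[p.2 r + 1] ⇑(ψ ((r : ℕ) + 2))) x *
          ∏ j ∈ Finset.univ.erase r, (deriv^[p.2 j] ⇑(ψ ((j : ℕ) + 2))) x := by
      rw [← Finset.mul_prod_erase Finset.univ _ (Finset.mem_univ r)]
      congr 1
      · simp [bump2]
      · refine Finset.prod_congr rfl fun j hj => ?_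
        rw [Finset.mem_erase] at hj
        simp [bump2, Function.update_of_ne hj.1]
    simp only [bump2] at h1
    simp only [mono, bump2, smul_eq_mul]
    rw [h1]
    ring

noncomputable def Dop (k : ℕ) (a : Idx k →₀ ℝ) : Idx k →₀ ℝ :=
  a.sum fun p c => (∑ r : Fin k, Finsupp.single (bump1 p r) c) +
    ∑ r : Fin (k - 1), Finsupp.single (bump2 p r) c

lemma hasDerivAt_lin (k : ℕ) (a : Idx k →₀ ℝ) (φ ψ : ℕ → SchwartzMap ℝ ℂ) (x : ℝ) :
    HasDerivAt (fun y => Finsupp.linearCombination ℝ (mono k φ ψ y) a)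
      (Finsupp.linearCombination ℝ (mono k φ ψ x) (Dop k a)) x := by
  have hR : Finsupp.linearCombination ℝ (mono k φ ψ x) (Dop k a) =
      ∑ p ∈ a.support, a p • ((∑ r : Fin k, mono k φ ψ x (bump1 p r)) +
        ∑ r : Fin (k - 1), mono k φ ψ x (bump2 p r)) := by
    rw [Dop, Finsupp.sum, map_sum]
    refine Finset.sum_congr rfl fun p _ => ?_
    rw [map_add, map_sum, map_sum]
    simp only [Finsupp.linearCombination_single]
    rw [smul_add, Finset.smul_sum, Finset.smul_sum]
  rw [hR]
  have hL : ∀ y, Finsupp.linearCombination ℝ (mono k φ ψ y) a =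
      ∑ p ∈ a.support, a p • mono k φ ψ y p := fun y => by
    rw [Finsupp.linearCombination_apply, Finsupp.sum]
  simp only [hL]
  exact HasDerivAt.fun_sum fun p _ => (hasDerivAt_mono k φ ψ p x).const_smul (a p)

lemma degP_bump1 {k : ℕ} (p : Idx k) (r : Fin k) : degP (bump1 p r) = degP p + 1 := by
  have h : ∀ r' : Fin k, ((Function.update p.1 r (p.1 r + 1)) r' : ℤ) =
      Function.update (fun i => (p.1 i : ℤ)) r ((p.1 r : ℤ) + 1) r' := by
    intro r'
    by_cases hr : r' = r
    · subst hr; simp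
    · simp [Function.update_of_ne hr]
  simp only [degP, bump1, h]
  rw [Finset.sum_update_of_mem (Finset.mem_univ r)]
  rw [← Finset.add_sum_erase Finset.univ (fun i => (p.1 i : ℤ)) (Finset.mem_univ r),
    Finset.erase_eq]
  ring

lemma degP_bump2 {k : ℕ} (p : Idx k) (r : Fin (k - 1)) : degP (bump2 p r) = degP p + 1 := by
  have h : ∀ r' : Fin (k - 1), ((Function.update p.2 r (p.2 r + 1)) r' : ℤ) =
      Function.update (fun i => (p.2 i : ℤ)) r ((p.2 r : ℤ) + 1) r' := by
    intro r'
    by_cases hr : r' = r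
    · subst hr; simp
    · simp [Function.update_of_ne hr]
  simp only [degP, bump2, h]
  rw [Finset.sum_update_of_mem (Finset.mem_univ r)]
  rw [← Finset.add_sum_erase Finset.univ (fun i => (p.2 i : ℤ)) (Finset.mem_univ r),
    Finset.erase_eq]
  ring

lemma support_Dop {k : ℕ} {a : Idx k →₀ ℝ} {d : ℤ}
    (ha : ∀ p ∈ a.support, degP p = d) :
    ∀ p' ∈ (Dop k a).support, degP p' = d + 1 := by
  intro p' hp'
  classical
  obtain ⟨p, hp, hp'2⟩ := Finset.mem_biUnion.mp (Finsupp.support_sum hp')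
  rcases Finset.mem_union.mp (Finsupp.support_add hp'2) with h | h
  · obtain ⟨r, _, hr⟩ := Finsupp.mem_support_finset_sum _ h
    have := Finset.mem_singleton.mp (Finsupp.support_single_subset hr)
    subst this
    rw [degP_bump1, ha p hp]
  · obtain ⟨r, _, hr⟩ := Finsupp.mem_support_finset_sum _ h
    have := Finset.mem_singleton.mp (Finsupp.support_single_subset hr)
    subst this
    rw [degP_bump2, ha p hp]

def mergeIdx (l j k : ℕ) (p : Idx l) (q : Idx j) : Idx k :=
  if h : l + j = k ∧ 1 ≤ l ∧ 1 ≤ j then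
    (fun r => Fin.append p.1 q.1 (Fin.cast h.1.symm r),
     fun r => Fin.append (Fin.append p.2 (fun _ : Fin 1 => 0)) q.2
       (Fin.cast (by omega : k - 1 = (l - 1) + 1 + (j - 1)) r))
  else (fun _ => 0, fun _ => 0)

lemma mono_mergeIdx {l j k : ℕ} (hl : 1 ≤ l) (hj : 1 ≤ j) (hk : l + j = k)
    (p : Idx l) (q : Idx j) (φ ψ : ℕ → SchwartzMap ℝ ℂ) (x : ℝ) :
    mono k φ ψ x (mergeIdx l j k p q) =
      ⇑(ψ (l + 1)) x * mono l φ ψ x p *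
        mono j (fun i => φ (l + i)) (fun i => ψ (l + i)) x q := by
  rw [mergeIdx, dif_pos ⟨hk, hl, hj⟩]
  have hcast : k - 1 = (l - 1) + 1 + (j - 1) := by omega
  have hA : (∏ r : Fin k,
      (deriv^[Fin.append p.1 q.1 (Fin.cast hk.symm r)] ⇑(φ ((r : ℕ) + 1))) x) =
      (∏ r : Fin l, (deriv^[p.1 r] ⇑(φ ((r : ℕ) + 1))) x) *
        ∏ r : Fin j, (deriv^[q.1 r] ⇑(φ (l + ((r : ℕ) + 1)))) x := by
    rw [show (∏ r : Fin k,
        (deriv^[Fin.append p.1 q.1 (Fin.cast hk.symm r)] ⇑(φ ((r : ℕ) + 1))) x) =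
        ∏ s : Fin (l + j), (deriv^[Fin.append p.1 q.1 s] ⇑(φ ((s : ℕ) + 1))) x from
      (Fintype.prod_equiv (finCongr hk) _ _ fun s => rfl).symm]
    rw [Fin.prod_univ_add]
    simp only [Fin.append_left, Fin.append_right, Fin.coe_castAdd, Fin.coe_natAdd]
    simp only [Nat.add_assoc]
  have hB : (∏ r : Fin (k - 1),
      (deriv^[Fin.append (Fin.append p.2 (fun _ : Fin 1 => 0)) q.2 (Fin.cast hcast r)]
        ⇑(ψ ((r : ℕ) + 2))) x) =
      ((∏ r : Fin (l - 1), (deriv^[p.2 r] ⇑(ψ ((r : ℕ) + 2))) x) * ⇑(ψ (l + 1)) x) *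
        ∏ r : Fin (j - 1), (deriv^[q.2 r] ⇑(ψ (l + ((r : ℕ) + 2)))) x := by
    rw [show (∏ r : Fin (k - 1),
        (deriv^[Fin.append (Fin.append p.2 (fun _ : Fin 1 => 0)) q.2 (Fin.cast hcast r)]
          ⇑(ψ ((r : ℕ) + 2))) x) =
        ∏ s : Fin ((l - 1) + 1 + (j - 1)),
          (deriv^[Fin.append (Fin.append p.2 (fun _ : Fin 1 => 0)) q.2 s]
            ⇑(ψ ((s : ℕ) + 2))) x from
      (Fintype.prod_equiv (finCongr hcast.symm) _ _ fun s => rfl).symm]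
    rw [Fin.prod_univ_add]
    simp only [Fin.append_left, Fin.append_right, Fin.coe_castAdd, Fin.coe_natAdd]
    rw [Fin.prod_univ_add]
    simp only [Fin.append_left, Fin.append_right, Fin.coe_castAdd, Fin.coe_natAdd,
      Fin.prod_univ_one, Function.iterate_zero, id_eq]
    congr 1
    · congr 1
      have : l - 1 + ((0 : Fin 1) : ℕ) + 2 = l + 1 := by
        have : ((0 : Fin 1) : ℕ) = 0 := rfl
        omega
      rw [this]
    · refine Finset.prod_congr rfl fun r _ => ?_
      have : l - 1 + 1 + (r : ℕ) + 2 = l + ((r : ℕ) + 2) := by omega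
      rw [this]
  simp only [mono]
  rw [hA, hB]
  ring

lemma degP_mergeIdx {l j k : ℕ} (hl : 1 ≤ l) (hj : 1 ≤ j) (hk : l + j = k)
    (p : Idx l) (q : Idx j) :
    degP (mergeIdx l j k p q) = degP p + degP q := by
  rw [mergeIdx, dif_pos ⟨hk, hl, hj⟩]
  have hcast : k - 1 = (l - 1) + 1 + (j - 1) := by omega
  simp only [degP]
  have hA : (∑ r : Fin k, ((Fin.append p.1 q.1 (Fin.cast hk.symm r) : ℕ) : ℤ)) =
      (∑ r : Fin l, ((p.1 r : ℕ) : ℤ)) + ∑ r : Fin j, ((q.1 r : ℕ) : ℤ) := by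
    rw [show (∑ r : Fin k, ((Fin.append p.1 q.1 (Fin.cast hk.symm r) : ℕ) : ℤ)) =
        ∑ s : Fin (l + j), ((Fin.append p.1 q.1 s : ℕ) : ℤ) from
      (Fintype.sum_equiv (finCongr hk) _ _ fun s => rfl).symm]
    rw [Fin.sum_univ_add]
    simp [Fin.append_left, Fin.append_right]
  have hB : (∑ r : Fin (k - 1),
      ((Fin.append (Fin.append p.2 (fun _ : Fin 1 => 0)) q.2 (Fin.cast hcast r) : ℕ) : ℤ)) =
      (∑ r : Fin (l - 1), ((p.2 r : ℕ) : ℤ)) + ∑ r : Fin (j - 1), ((q.2 r : ℕ) : ℤ) := by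
    rw [show (∑ r : Fin (k - 1),
        ((Fin.append (Fin.append p.2 (fun _ : Fin 1 => 0)) q.2 (Fin.cast hcast r) : ℕ) : ℤ)) =
        ∑ s : Fin ((l - 1) + 1 + (j - 1)),
          ((Fin.append (Fin.append p.2 (fun _ : Fin 1 => 0)) q.2 s : ℕ) : ℤ) from
      (Fintype.sum_equiv (finCongr hcast.symm) _ _ fun s => rfl).symm]
    rw [Fin.sum_univ_add]
    simp [Fin.append_left, Fin.append_right, Fin.sum_univ_add]
  rw [hA, hB]
  ring

noncomputable def mergeF (l j k : ℕ) (a : Idx l →₀ ℝ) (b : Idx j →₀ ℝ) : Idx k →₀ ℝ :=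
  a.sum fun p cp => b.sum fun q cq => Finsupp.single (mergeIdx l j k p q) (cp * cq)

lemma lin_mergeF {l j k : ℕ} (hl : 1 ≤ l) (hj : 1 ≤ j) (hk : l + j = k)
    (a : Idx l →₀ ℝ) (b : Idx j →₀ ℝ) (φ ψ : ℕ → SchwartzMap ℝ ℂ) (x : ℝ) :
    Finsupp.linearCombination ℝ (mono k φ ψ x) (mergeF l j k a b) =
      ⇑(ψ (l + 1)) x * Finsupp.linearCombination ℝ (mono l φ ψ x) a *
        Finsupp.linearCombination ℝ
          (mono j (fun i => φ (l + i)) (fun i => ψ (l + i)) x) b := by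
  rw [mergeF, Finsupp.sum, map_sum]
  simp only [Finsupp.sum, map_sum, Finsupp.linearCombination_single]
  simp only [Finsupp.linearCombination_apply, Finsupp.sum, Finset.sum_mul, Finset.mul_sum]
  rw [Finset.sum_comm]
  refine Finset.sum_congr rfl fun p _ => Finset.sum_congr rfl fun q _ => ?_
  rw [mono_mergeIdx hl hj hk]
  simp only [Complex.real_smul, Complex.ofReal_mul]
  ring

lemma support_mergeF {l j k : ℕ} {a : Idx l →₀ ℝ} {b : Idx j →₀ ℝ} {da db : ℤ}
    (hl : 1 ≤ l) (hj : 1 ≤ j) (hk : l + j = k)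
    (ha : ∀ p ∈ a.support, degP p = da) (hb : ∀ q ∈ b.support, degP q = db) :
    ∀ p' ∈ (mergeF l j k a b).support, degP p' = da + db := by
  intro p' hp'
  classical
  obtain ⟨p, hp, hp'2⟩ := Finset.mem_biUnion.mp (Finsupp.support_sum hp')
  obtain ⟨q, hq, hp'3⟩ := Finset.mem_biUnion.mp (Finsupp.support_sum hp'2)
  have := Finset.mem_singleton.mp (Finsupp.support_single_subset hp'3)
  subst this
  rw [degP_mergeIdx hl hj hk, ha p hp, hb q hq]

lemma key (κ : ℂ) (hκ : κ = 1 ∨ κ = -1)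
    (w : ℕ → ℕ → (ℕ → ℝ → ℂ) → (ℕ → ℝ → ℂ) → ℝ → ℂ)
    (hw_base₁ : ∀ φ ψ : ℕ → ℝ → ℂ, w 1 1 φ ψ = φ 1)
    (hw_base₂ : ∀ k, 2 ≤ k → ∀ φ ψ : ℕ → ℝ → ℂ, w 1 k φ ψ = 0)
    (hw_rec : ∀ n k, 1 ≤ n → 1 ≤ k → ∀ (φ ψ : ℕ → ℝ → ℂ) (x : ℝ),
      w (n + 1) k φ ψ x =
        -Complex.I * deriv (w n k φ ψ) x +
          κ * ∑ m ∈ Finset.Ico 1 n, ∑ l ∈ Finset.Ico 1 k,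
            ψ (l + 1) x * w m l φ ψ x *
              w (n - m) (k - l) (fun i => φ (l + i)) (fun i => ψ (l + i)) x) :
    ∀ n : ℕ, 1 ≤ n → ∀ k : ℕ, 1 ≤ k →
      ∃ a : Idx k →₀ ℝ,
        (∀ p ∈ a.support, degP p = (n : ℤ) - 1 - 2 * ((k : ℤ) - 1)) ∧
        ∀ (φ ψ : ℕ → SchwartzMap ℝ ℂ) (x : ℝ),
          w n k (fun i => ⇑(φ i)) (fun i => ⇑(ψ i)) x =
            Complex.I ^ (n - 1) * Finsupp.linearCombination ℝ (mono k φ ψ x) a := by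
  intro n
  induction n using Nat.strong_induction_on with
  | _ n ih =>
  intro hn k hk
  set κr : ℝ := if κ = 1 then 1 else -1 with hκr_def
  have hκr : (κr : ℂ) = κ := by
    rcases hκ with h | h <;> subst h <;> norm_num [hκr_def]
  rcases eq_or_lt_of_le hn with h1 | h2
  · -- base case n = 1
    subst h1
    rcases eq_or_lt_of_le hk with hk1 | hk2
    · -- k = 1
      subst hk1
      refine ⟨Finsupp.single ((fun _ => 0), (fun _ => 0)) 1, ?_, ?_⟩
      · intro p hp
        have := Finset.mem_singleton.mp (Finsupp.support_single_subset hp)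
        subst this
        simp [degP]
      · intro φ ψ x
        rw [hw_base₁]
        simp [mono, Finsupp.linearCombination_single]
    · -- k ≥ 2
      refine ⟨0, by simp, fun φ ψ x => ?_⟩
      rw [hw_base₂ k hk2]
      simp
  · -- inductive step: n ≥ 2
    obtain ⟨n', rfl⟩ : ∃ n', n = n' + 1 := ⟨n - 1, by omega⟩
    have hn' : 1 ≤ n' := by omega
    -- choice function for smaller indices
    have H : ∀ m k', ∃ a : Idx k' →₀ ℝ, (m < n' + 1 ∧ 1 ≤ m ∧ 1 ≤ k') →
        (∀ p ∈ a.support, degP p = (m : ℤ) - 1 - 2 * ((k' : ℤ) - 1)) ∧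
        ∀ (φ ψ : ℕ → SchwartzMap ℝ ℂ) (x : ℝ),
          w m k' (fun i => ⇑(φ i)) (fun i => ⇑(ψ i)) x =
            Complex.I ^ (m - 1) * Finsupp.linearCombination ℝ (mono k' φ ψ x) a := by
      intro m k'
      by_cases h : m < n' + 1 ∧ 1 ≤ m ∧ 1 ≤ k'
      · obtain ⟨a, ha⟩ := ih m h.1 h.2.1 k' h.2.2
        exact ⟨a, fun _ => ha⟩
      · exact ⟨0, fun hc => absurd hc h⟩
    choose A hA using H
    set a_new : Idx k →₀ ℝ :=
      (-1 : ℝ) • Dop k (A n' k) +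
        ∑ m ∈ Finset.Ico 1 n', ∑ l ∈ Finset.Ico 1 k,
          (-κr) • mergeF l (k - l) k (A m l) (A (n' - m) (k - l)) with ha_new
    have hdegA : ∀ p ∈ (A n' k).support, degP p = (n' : ℤ) - 1 - 2 * ((k : ℤ) - 1) :=
      (hA n' k ⟨by omega, hn', hk⟩).1
    refine ⟨a_new, ?_, ?_⟩
    · -- degree condition
      intro p hp
      by_contra hne
      have hzero : a_new p = 0 := by
        rw [ha_new]
        rw [Finsupp.add_apply, Finsupp.smul_apply, Finsupp.finset_sum_apply]
        have hz1 : Dop k (A n' k) p = 0 := by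
          by_contra h
          exact hne (by
            have := support_Dop hdegA p (Finsupp.mem_support_iff.mpr h)
            push_cast
            omega)
        have hz2 : ∀ m ∈ Finset.Ico 1 n',
            (∑ l ∈ Finset.Ico 1 k,
              (-κr) • mergeF l (k - l) k (A m l) (A (n' - m) (k - l))) p = 0 := by
          intro m hm
          rw [Finset.mem_Ico] at hm
          rw [Finsupp.finset_sum_apply]
          refine Finset.sum_eq_zero fun l hl => ?_
          rw [Finset.mem_Ico] at hl
          rw [Finsupp.smul_apply]
          have hz3 : mergeF l (k - l) k (A m l) (A (n' - m) (k - l)) p = 0 := by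
            by_contra h
            refine hne ?_
            have hda := (hA m l ⟨by omega, by omega, by omega⟩).1
            have hdb := (hA (n' - m) (k - l) ⟨by omega, by omega, by omega⟩).1
            have := support_mergeF (by omega) (by omega) (by omega) hda hdb p
              (Finsupp.mem_support_iff.mpr h)
            have hc1 : ((n' - m : ℕ) : ℤ) = (n' : ℤ) - m := by
              push_cast [Nat.cast_sub (by omega : m ≤ n')]; ring
            have hc2 : ((k - l : ℕ) : ℤ) = (k : ℤ) - l := by
              push_cast [Nat.cast_sub (by omega : l ≤ k)]; ring
            rw [hc1, hc2] at this
            push_cast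
            omega
          rw [hz3, smul_zero]
        rw [hz1, Finset.sum_eq_zero hz2]
        simp
      exact (Finsupp.mem_support_iff.mp hp) hzero
    · -- evaluation
      intro φ ψ x
      have hwn' := (hA n' k ⟨by omega, hn', hk⟩).2
      have hfun : w n' k (fun i => ⇑(φ i)) (fun i => ⇑(ψ i)) =
          fun y => Complex.I ^ (n' - 1) *
            Finsupp.linearCombination ℝ (mono k φ ψ y) (A n' k) :=
        funext fun y => hwn' φ ψ y
      have hD : deriv (w n' k (fun i => ⇑(φ i)) (fun i => ⇑(ψ i))) x =
          Complex.I ^ (n' - 1) *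
            Finsupp.linearCombination ℝ (mono k φ ψ x) (Dop k (A n' k)) := by
        rw [hfun]
        exact ((hasDerivAt_lin k (A n' k) φ ψ x).const_mul (Complex.I ^ (n' - 1))).deriv
      have hterm : ∀ m ∈ Finset.Ico 1 n', ∀ l ∈ Finset.Ico 1 k,
          (fun i => ⇑(ψ i)) (l + 1) x * w m l (fun i => ⇑(φ i)) (fun i => ⇑(ψ i)) x *
            w (n' - m) (k - l) (fun i => (fun i => ⇑(φ i)) (l + i))
              (fun i => (fun i => ⇑(ψ i)) (l + i)) x =
          Complex.I ^ (m - 1) * Complex.I ^ (n' - m - 1) *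
            Finsupp.linearCombination ℝ (mono k φ ψ x)
              (mergeF l (k - l) k (A m l) (A (n' - m) (k - l))) := by
        intro m hm l hl
        rw [Finset.mem_Ico] at hm hl
        have h1 := (hA m l ⟨by omega, by omega, by omega⟩).2 φ ψ x
        have h2 := (hA (n' - m) (k - l) ⟨by omega, by omega, by omega⟩).2
          (fun i => φ (l + i)) (fun i => ψ (l + i)) x
        rw [show (fun i => (fun i => ⇑(φ i)) (l + i)) = (fun i => ⇑(φ (l + i))) from rfl,
          show (fun i => (fun i => ⇑(ψ i)) (l + i)) = (fun i => ⇑(ψ (l + i))) from rfl]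
        rw [h1, h2]
        rw [lin_mergeF (by omega) (by omega) (by omega)]
        ring
      rw [hw_rec n' k hn' hk, hD]
      have hS : (∑ m ∈ Finset.Ico 1 n', ∑ l ∈ Finset.Ico 1 k,
          (fun i => ⇑(ψ i)) (l + 1) x * w m l (fun i => ⇑(φ i)) (fun i => ⇑(ψ i)) x *
            w (n' - m) (k - l) (fun i => (fun i => ⇑(φ i)) (l + i))
              (fun i => (fun i => ⇑(ψ i)) (l + i)) x) =
          ∑ m ∈ Finset.Ico 1 n', ∑ l ∈ Finset.Ico 1 k,
            Complex.I ^ (m - 1) * Complex.I ^ (n' - m - 1) *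
              Finsupp.linearCombination ℝ (mono k φ ψ x)
                (mergeF l (k - l) k (A m l) (A (n' - m) (k - l))) :=
        Finset.sum_congr rfl fun m hm => Finset.sum_congr rfl fun l hl => hterm m hm l hl
      rw [hS, ha_new]
      simp only [map_add, map_smul, map_sum]
      rw [mul_add]
      congr 1
      · -- deriv term
        have hpow : Complex.I ^ (n' + 1 - 1) = Complex.I ^ (n' - 1) * Complex.I := by
          rw [← pow_succ]
          congr 1
          omega
        rw [hpow]
        simp only [Complex.real_smul]
        push_cast
        ring
      · -- quadratic terms
        rw [Finset.mul_sum, Finset.mul_sum]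
        refine Finset.sum_congr rfl fun m hm => ?_
        rw [Finset.mul_sum, Finset.mul_sum]
        refine Finset.sum_congr rfl fun l hl => ?_
        rw [Finset.mem_Ico] at hm hl
        have hpow1 : Complex.I ^ (m - 1) * Complex.I ^ (n' - m - 1) =
            Complex.I ^ (n' - 2) := by
          rw [← pow_add]
          congr 1
          omega
        have hpow2 : Complex.I ^ (n' + 1 - 1) = Complex.I ^ (n' - 2) * Complex.I ^ 2 := by
          rw [← pow_add]
          congr 1
          omega
        rw [hpow1, hpow2, Complex.I_sq]
        simp only [Complex.real_smul, ← hκr]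
        push_cast
        ring

end NLSaux

open NLSaux in
/-- Structure of the multilinear components: for odd `n` (resp. even `n`),
`w n k [φ;ψ]` is a real-linear combination (resp. `i` times a real-linear combination) of
products `∏ ∂^{α_r} φ_r · ∏ ∂^{α'_r} ψ_r` over multi-index pairs `(α, α')` with
`|α| + |α'| = n - 1 - 2(k-1)`. -/
theorem nls_hierarchy_multilinear_structure
    (κ : ℂ) (hκ : κ = 1 ∨ κ = -1)
    (w : ℕ → ℕ → (ℕ → ℝ → ℂ) → (ℕ → ℝ → ℂ) → ℝ → ℂ)
    (hw_base₁ : ∀ φ ψ : ℕ → ℝ → ℂ, w 1 1 φ ψ = φ 1)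
    (hw_base₂ : ∀ k, 2 ≤ k → ∀ φ ψ : ℕ → ℝ → ℂ, w 1 k φ ψ = 0)
    (hw_rec : ∀ n k, 1 ≤ n → 1 ≤ k → ∀ (φ ψ : ℕ → ℝ → ℂ) (x : ℝ),
      w (n + 1) k φ ψ x =
        -Complex.I * deriv (w n k φ ψ) x +
          κ * ∑ m ∈ Finset.Ico 1 n, ∑ l ∈ Finset.Ico 1 k,
            ψ (l + 1) x * w m l φ ψ x *
              w (n - m) (k - l) (fun i => φ (l + i)) (fun i => ψ (l + i)) x)
    (n k : ℕ) (hn : 1 ≤ n) (hk : 1 ≤ k) :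
    (Odd n →
      ∃ a : ((Fin k → ℕ) × (Fin (k - 1) → ℕ)) →₀ ℝ,
        (∀ p ∈ a.support,
          (∑ r : Fin k, (p.1 r : ℤ)) + (∑ r : Fin (k - 1), (p.2 r : ℤ)) =
            (n : ℤ) - 1 - 2 * ((k : ℤ) - 1)) ∧
        ∀ (φ ψ : ℕ → SchwartzMap ℝ ℂ) (x : ℝ),
          w n k (fun i => ⇑(φ i)) (fun i => ⇑(ψ i)) x =
            a.sum (fun p c =>
              ((c : ℂ) * ∏ r : Fin k, (deriv^[p.1 r] ⇑(φ ((r : ℕ) + 1))) x) *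
                ∏ r : Fin (k - 1), (deriv^[p.2 r] ⇑(ψ ((r : ℕ) + 2))) x)) ∧
    (Even n →
      ∃ a : ((Fin k → ℕ) × (Fin (k - 1) → ℕ)) →₀ ℝ,
        (∀ p ∈ a.support,
          (∑ r : Fin k, (p.1 r : ℤ)) + (∑ r : Fin (k - 1), (p.2 r : ℤ)) =
            (n : ℤ) - 1 - 2 * ((k : ℤ) - 1)) ∧
        ∀ (φ ψ : ℕ → SchwartzMap ℝ ℂ) (x : ℝ),
          w n k (fun i => ⇑(φ i)) (fun i => ⇑(ψ i)) x =
            Complex.I * a.sum (fun p c =>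
              ((c : ℂ) * ∏ r : Fin k, (deriv^[p.1 r] ⇑(φ ((r : ℕ) + 1))) x) *
                ∏ r : Fin (k - 1), (deriv^[p.2 r] ⇑(ψ ((r : ℕ) + 2))) x)) := by
  obtain ⟨a, hdeg, heval⟩ :
      ∃ a : Idx k →₀ ℝ,
        (∀ p ∈ a.support, degP p = (n : ℤ) - 1 - 2 * ((k : ℤ) - 1)) ∧
        ∀ (φ ψ : ℕ → SchwartzMap ℝ ℂ) (x : ℝ),
          w n k (fun i => ⇑(φ i)) (fun i => ⇑(ψ i)) x =
            Complex.I ^ (n - 1) * Finsupp.linearCombination ℝ (mono k φ ψ x) a :=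
    key κ hκ w hw_base₁ hw_base₂ hw_rec n hn k hk
  constructor
  · intro hodd
    obtain ⟨t, ht⟩ : ∃ t, n - 1 = 2 * t := by
      obtain ⟨s, hs⟩ := hodd
      exact ⟨s, by omega⟩
    have hI : Complex.I ^ (n - 1) = (((-1 : ℝ) ^ t : ℝ) : ℂ) := by
      rw [ht, pow_mul, Complex.I_sq]
      push_cast
      ring
    refine ⟨((-1 : ℝ) ^ t) • a, ?_, ?_⟩
    · intro p hp
      exact hdeg p (Finsupp.support_smul hp)
    · intro φ ψ x
      rw [heval φ ψ x, expand_eq, map_smul, hI]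
      rw [Complex.real_smul]
  · intro heven
    have hn2 : 2 ≤ n := by
      rcases heven with ⟨s, hs⟩
      omega
    obtain ⟨t, ht⟩ : ∃ t, n - 1 = 2 * t + 1 := by
      obtain ⟨s, hs⟩ := heven
      exact ⟨s - 1, by omega⟩
    have hI : Complex.I ^ (n - 1) = Complex.I * (((-1 : ℝ) ^ t : ℝ) : ℂ) := by
      rw [ht, pow_succ, pow_mul, Complex.I_sq]
      push_cast
      ring
    refine ⟨((-1 : ℝ) ^ t) • a, ?_, ?_⟩
    · intro p hp
      exact hdeg p (Finsupp.support_smul hp)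
    · intro φ ψ x
      rw [heval φ ψ x, expand_eq, map_smul, hI]
      rw [Complex.real_smul]
      ring
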